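/- arXiv:2006.15431 — 3 statements merged into one kernel-verified Lean document; each statement's English description precedes it below -/
import Mathlib

section
/- The Skorokhod map does not increase the modulus of continuity: for every continuous function h on [0,T] and every δ ∈ [0,T], we have ω_δ(Γh) ≤ ω_δ(h), where ω_δ(ψ) = sup{|ψ(t) - ψ(s)| : t,s ∈ [0,T], |t-s| ≤ δ}. -/
open MeasureTheory Real Set

/-- The Skorokhod map: `(Γ f)(t) = f(t) - min_{s ∈ [0,t]} (f(s) ∧ 0)`. -/
noncomputable def skorokhod (f : ℝ → ℝ) (t : ℝ) : ℝ :=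
  f t - sInf ((fun s => min (f s) 0) '' Set.Icc 0 t)

/-- The modulus of continuity `ω_δ(ψ) = sup {|ψ(t) - ψ(s)| : t,s ∈ [0,T], |t - s| ≤ δ}`. -/
noncomputable def modCont (T : ℝ) (ψ : ℝ → ℝ) (δ : ℝ) : ℝ :=
  sSup {x : ℝ | ∃ t ∈ Set.Icc (0:ℝ) T, ∃ s ∈ Set.Icc (0:ℝ) T, |t - s| ≤ δ ∧ x = |ψ t - ψ s|}

theorem skorokhod_modCont_le (T : ℝ) (hT : 0 < T) (h : ℝ → ℝ)
    (hh : ContinuousOn h (Set.Icc 0 T)) (δ : ℝ) (hδ : δ ∈ Set.Icc 0 T) :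
    modCont T (skorokhod h) δ ≤ modCont T h δ := by
  set K : ℝ → Set ℝ := fun t => (fun s => min (h s) 0) '' Set.Icc 0 t with hKdef
  have hg : ContinuousOn (fun s => min (h s) 0) (Set.Icc 0 T) := hh.inf continuousOn_const
  have hKcomp : ∀ t ∈ Set.Icc (0:ℝ) T, IsCompact (K t) := fun t ht =>
    isCompact_Icc.image_of_continuousOn (hg.mono (Set.Icc_subset_Icc_right ht.2))
  have hKne : ∀ t ∈ Set.Icc (0:ℝ) T, (K t).Nonempty := fun t ht =>
    ⟨_, Set.mem_image_of_mem _ (Set.mem_Icc.2 ⟨le_refl 0, ht.1⟩)⟩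
  set m : ℝ → ℝ := fun t => sInf (K t) with hmdef
  have hsk : ∀ t, skorokhod h t = h t - m t := fun t => rfl
  -- m t ≤ min (h r) 0 for r ∈ [0, t]
  have hmle : ∀ t ∈ Set.Icc (0:ℝ) T, ∀ r ∈ Set.Icc (0:ℝ) t, m t ≤ min (h r) 0 :=
    fun t ht r hr => csInf_le (hKcomp t ht).bddBelow (Set.mem_image_of_mem _ hr)
  -- antitonicity
  have hanti : ∀ s t, s ∈ Set.Icc (0:ℝ) T → t ∈ Set.Icc (0:ℝ) T → s ≤ t → m t ≤ m s :=
    fun s t hs ht hst => csInf_le_csInf (hKcomp t ht).bddBelow (hKne s hs)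
      (Set.image_mono (Set.Icc_subset_Icc_right hst))
  -- inf attained
  have hmem : ∀ t ∈ Set.Icc (0:ℝ) T, ∃ u ∈ Set.Icc (0:ℝ) t, min (h u) 0 = m t := by
    intro t ht
    have := (hKcomp t ht).sInf_mem (hKne t ht)
    obtain ⟨u, hu, hu'⟩ := this
    exact ⟨u, hu, hu'⟩
  -- bound via modCont of h
  have hbdd : BddAbove {x : ℝ | ∃ t ∈ Set.Icc (0:ℝ) T, ∃ s ∈ Set.Icc (0:ℝ) T,
      |t - s| ≤ δ ∧ x = |h t - h s|} := by
    have hc : IsCompact ((fun p : ℝ × ℝ => |h p.1 - h p.2|) '' (Set.Icc 0 T ×ˢ Set.Icc 0 T)) := by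
      apply (isCompact_Icc.prod isCompact_Icc).image_of_continuousOn
      exact ((hh.comp continuousOn_fst (fun p hp => hp.1)).sub
        (hh.comp continuousOn_snd fun p hp => hp.2)).abs
    refine hc.bddAbove.mono ?_
    rintro x ⟨t, ht, s, hs, -, rfl⟩
    exact ⟨(t, s), ⟨ht, hs⟩, rfl⟩
  have hωle : ∀ a ∈ Set.Icc (0:ℝ) T, ∀ b ∈ Set.Icc (0:ℝ) T, |a - b| ≤ δ →
      |h a - h b| ≤ modCont T h δ := fun a ha b hb hab =>
    le_csSup hbdd ⟨a, ha, b, hb, hab, rfl⟩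
  -- key estimate for s ≤ t
  have key : ∀ s t, s ∈ Set.Icc (0:ℝ) T → t ∈ Set.Icc (0:ℝ) T → s ≤ t → t - s ≤ δ →
      |skorokhod h t - skorokhod h s| ≤ modCont T h δ := by
    intro s t hs ht hst hd
    have hts : |t - s| ≤ δ := by rw [abs_of_nonneg (by linarith)]; exact hd
    have hhts : |h t - h s| ≤ modCont T h δ := hωle t ht s hs hts
    have h1 : m t ≤ m s := hanti s t hs ht hst
    rw [hsk, hsk, abs_le]
    constructor
    · have := neg_abs_le (h t - h s); linarith
    · obtain ⟨u, hu, hmu⟩ := hmem t ht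
      by_cases hms : m s ≤ m t
      · have := le_abs_self (h t - h s); linarith
      · push_neg at hms
        -- m t < m s; show u > s, h u < 0
        have hus : s < u := by
          by_contra hle
          push_neg at hle
          have : m s ≤ min (h u) 0 := hmle s hs u ⟨hu.1, hle⟩
          linarith [hmu ▸ this]
        have hms0 : m s ≤ 0 := le_trans (hmle s hs s ⟨hs.1, le_rfl⟩) (min_le_right _ _)
        have hmu0 : min (h u) 0 < 0 := by rw [hmu]; linarith
        have hhu : min (h u) 0 = h u := by
          rcases min_cases (h u) 0 with ⟨e, _⟩ | ⟨e, _⟩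
          · exact e
          · linarith [hmu0, e]
        have hmsh : m s ≤ h s := le_trans (hmle s hs s ⟨hs.1, le_rfl⟩) (min_le_left _ _)
        have huT : u ∈ Set.Icc (0:ℝ) T := ⟨hu.1, le_trans hu.2 ht.2⟩
        have htu : |t - u| ≤ δ := by
          rw [abs_of_nonneg (by linarith [hu.2])]; linarith [hu.2]
        have h2 : |h t - h u| ≤ modCont T h δ := hωle t ht u huT htu
        have h3 : m t = h u := by rw [← hmu, hhu]
        have := le_abs_self (h t - h u)
        linarith
  -- conclude
  apply csSup_le
  · exact ⟨|skorokhod h 0 - skorokhod h 0|, 0, Set.left_mem_Icc.2 hT.le, 0,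
      Set.left_mem_Icc.2 hT.le, by simpa using hδ.1, rfl⟩
  · rintro x ⟨t, ht, s, hs, hts, rfl⟩
    rcases le_total s t with h' | h'
    · exact key s t hs ht h' (by rwa [abs_of_nonneg (by linarith)] at hts)
    · rw [abs_sub_comm]
      exact key t s ht hs h' (by rwa [abs_of_nonpos (by linarith), neg_sub] at hts)
end

section
/- Let a ≥ 0, ξ > 0, and let f be an absolutely continuous function on [0,T] with f(0) = 0 and square-integrable derivative. Define φ_f(t) = a t + ξ f(t). Then (Γφ_f)(t) = 0 for all t ∈ [0,T] if and only if f'(t) ≤ -a/ξ almost everywhere on [0,T] with respect to Lebesgue measure. -/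
open MeasureTheory Real Set

theorem skorokhod_drift_eq_zero_iff_deriv_le (T a ξ : ℝ) (hT : 0 < T) (ha : 0 ≤ a)
    (hξ : 0 < ξ) (f f' : ℝ → ℝ) (hf0 : f 0 = 0)
    (hfint : ∀ t ∈ Set.Icc 0 T, f t = ∫ s in (0:ℝ)..t, f' s)
    (hL2 : MemLp f' 2 (volume.restrict (Set.Icc (0:ℝ) T))) :
    (∀ t ∈ Set.Icc 0 T, skorokhod (fun u => a * u + ξ * f u) t = 0) ↔
      ∀ᵐ t ∂(volume.restrict (Set.Icc (0:ℝ) T)), f' t ≤ -a / ξ := by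
  set φ : ℝ → ℝ := fun u => a * u + ξ * f u with hφdef
  set g : ℝ → ℝ := fun s => a + ξ * f' s with hgdef
  haveI : IsFiniteMeasure (volume.restrict (Set.Icc (0:ℝ) T)) :=
    ⟨by rw [Measure.restrict_apply_univ]; exact measure_Icc_lt_top⟩
  have hfi : IntegrableOn f' (Set.Icc 0 T) := hL2.integrable (by norm_num)
  have hgi : IntegrableOn g (Set.Icc 0 T) :=
    (integrable_const a).add (hfi.const_mul ξ)
  have hgiI : ∀ s t : ℝ, 0 ≤ s → t ≤ T → s ≤ t → IntervalIntegrable g volume s t := by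
    intro s t hs ht hst
    have : IntegrableOn g (Set.uIcc s t) := by
      rw [Set.uIcc_of_le hst]
      exact hgi.mono_set (Set.Icc_subset_Icc hs ht)
    exact this.intervalIntegrable
  have hfiI : ∀ t : ℝ, 0 ≤ t → t ≤ T → IntervalIntegrable f' volume 0 t := by
    intro t h0 hTt
    have : IntegrableOn f' (Set.uIcc 0 t) := by
      rw [Set.uIcc_of_le h0]
      exact hfi.mono_set (Set.Icc_subset_Icc le_rfl hTt)
    exact this.intervalIntegrable
  have hφ0 : φ 0 = 0 := by simp [hφdef, hf0]
  have hφeq : ∀ t ∈ Set.Icc (0:ℝ) T, φ t = ∫ s in (0:ℝ)..t, g s := by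
    intro t ht
    have h1 : ∫ s in (0:ℝ)..t, g s
        = (∫ s in (0:ℝ)..t, (a:ℝ)) + ∫ s in (0:ℝ)..t, ξ * f' s := by
      rw [← intervalIntegral.integral_add intervalIntegrable_const
        ((hfiI t ht.1 ht.2).const_mul ξ)]
    rw [h1, intervalIntegral.integral_const, intervalIntegral.integral_const_mul,
      ← hfint t ht]
    simp [hφdef, smul_eq_mul, mul_comm]
  have hφcont : ContinuousOn φ (Set.Icc 0 T) := by
    have hInt : IntegrableOn g (Set.uIcc (0:ℝ) T) := by
      rw [Set.uIcc_of_le hT.le]; exact hgi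
    have := (intervalIntegral.continuousOn_primitive_interval hInt)
    rw [Set.uIcc_of_le hT.le] at this
    exact this.congr hφeq
  -- difference of φ values as interval integral
  have hφdiff : ∀ s t : ℝ, s ∈ Set.Icc (0:ℝ) T → t ∈ Set.Icc (0:ℝ) T → s ≤ t →
      φ t - φ s = ∫ u in s..t, g u := by
    intro s t hs ht hst
    rw [hφeq s hs, hφeq t ht]
    rw [← intervalIntegral.integral_interval_sub_left (hgiI 0 t le_rfl ht.2 ht.1)
      (hgiI 0 s le_rfl hs.2 hs.1)]
  constructor
  · -- forward direction
    intro hS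
    -- φ is antitone on [0,T]
    have hanti : ∀ s ∈ Set.Icc (0:ℝ) T, ∀ t ∈ Set.Icc (0:ℝ) T, s ≤ t → φ t ≤ φ s := by
      intro s hs t ht hst
      have h0 := hS t ht
      have hbdd : BddBelow ((fun u => min (φ u) 0) '' Set.Icc 0 t) := by
        apply (isCompact_Icc.image_of_continuousOn _).bddBelow
        exact ((hφcont.mono (Set.Icc_subset_Icc le_rfl ht.2)).inf continuousOn_const)
      have hmem : min (φ s) 0 ∈ (fun u => min (φ u) 0) '' Set.Icc 0 t :=
        ⟨s, ⟨hs.1, hst⟩, rfl⟩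
      have : φ t ≤ min (φ s) 0 := by
        have hsk : φ t = sInf ((fun u => min (φ u) 0) '' Set.Icc 0 t) := by
          have := hS t ht
          unfold skorokhod at this
          linarith
        rw [hsk]
        exact csInf_le hbdd hmem
      exact this.trans (min_le_left _ _)
    -- interval integrals of g are nonpositive
    have hint_le : ∀ s t : ℝ, s ∈ Set.Icc (0:ℝ) T → t ∈ Set.Icc (0:ℝ) T → s ≤ t →
        (∫ u in s..t, g u) ≤ 0 := by
      intro s t hs ht hst
      rw [← hφdiff s t hs ht hst]
      linarith [hanti s hs t ht hst]
    -- Lebesgue differentiation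
    set G : ℝ → ℝ := (Set.Icc (0:ℝ) T).indicator g with hGdef
    have hGint : Integrable G := (integrable_indicator_iff measurableSet_Icc).2 hgi
    have hGloc : LocallyIntegrable G volume := hGint.locallyIntegrable
    have hball : ∀ x r : ℝ, 0 < r → 0 ≤ x - r → x + r ≤ T →
        (∫ y in Metric.closedBall x r, G y) ≤ 0 := by
      intro x r hr hxr hxT
      rw [Real.closedBall_eq_Icc]
      have hsub : Set.Icc (x - r) (x + r) ⊆ Set.Icc 0 T :=
        Set.Icc_subset_Icc hxr hxT
      have h1 : (∫ y in Set.Icc (x - r) (x + r), G y)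
          = ∫ y in Set.Icc (x - r) (x + r), g y := by
        apply setIntegral_congr_fun measurableSet_Icc
        intro y hy
        exact Set.indicator_of_mem (hsub hy) g
      rw [h1, integral_Icc_eq_integral_Ioc,
        ← intervalIntegral.integral_of_le (by linarith : x - r ≤ x + r)]
      exact hint_le (x - r) (x + r) ⟨hxr, by linarith⟩ ⟨by linarith, hxT⟩ (by linarith)
    have hdiff := IsUnifLocDoublingMeasure.ae_tendsto_average
      (μ := (volume : Measure ℝ)) hGloc 1
    -- transfer to the restricted measure via Ioo
    rw [← Measure.restrict_congr_set Ioo_ae_eq_Icc]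
    rw [ae_restrict_iff' measurableSet_Ioo]
    filter_upwards [hdiff] with x hx hxIoo
    have hlim : Filter.Tendsto (fun r => ⨍ y in Metric.closedBall x r, G y)
        (nhdsWithin 0 (Set.Ioi 0)) (nhds (G x)) := by
      apply hx (fun _ => x) id Filter.tendsto_id
      filter_upwards [self_mem_nhdsWithin] with r hr
      exact Metric.mem_closedBall_self (by simpa using le_of_lt hr)
    have hGx : G x ≤ 0 := by
      apply le_of_tendsto hlim
      have hmin : 0 < min x (T - x) := lt_min hxIoo.1 (by linarith [hxIoo.2])
      filter_upwards [Ioo_mem_nhdsGT_of_mem (Set.mem_Ico.2 ⟨le_rfl, hmin⟩)] with r hr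
      have hr0 : 0 < r := hr.1
      have hr1 : r < x := lt_of_lt_of_le hr.2 (min_le_left _ _)
      have hr2 : r < T - x := lt_of_lt_of_le hr.2 (min_le_right _ _)
      rw [setAverage_eq]
      have := hball x r hr0 (by linarith) (by linarith)
      have hnn : (0:ℝ) ≤ ((volume (Metric.closedBall x r)).toReal)⁻¹ := by positivity
      calc ((volume (Metric.closedBall x r)).toReal)⁻¹ • ∫ y in Metric.closedBall x r, G y
          ≤ ((volume (Metric.closedBall x r)).toReal)⁻¹ • 0 := by
            exact smul_le_smul_of_nonneg_left this hnn
        _ = 0 := by simp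
    have hGx' : a + ξ * f' x ≤ 0 := by
      have : G x = g x := Set.indicator_of_mem (Set.mem_Icc.2 ⟨hxIoo.1.le, hxIoo.2.le⟩) g
      rw [this] at hGx
      exact hGx
    rw [le_div_iff₀ hξ]
    linarith
  · -- backward direction
    intro hae
    have hgae : ∀ᵐ u ∂(volume.restrict (Set.Icc (0:ℝ) T)), g u ≤ 0 := by
      filter_upwards [hae] with u hu
      have : ξ * f' u ≤ ξ * (-a / ξ) := by
        exact mul_le_mul_of_nonneg_left hu hξ.le
      have h2 : ξ * (-a / ξ) = -a := by field_simp
      simp only [hgdef]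
      linarith [this.trans_eq h2]
    have hanti : ∀ s ∈ Set.Icc (0:ℝ) T, ∀ t ∈ Set.Icc (0:ℝ) T, s ≤ t → φ t ≤ φ s := by
      intro s hs t ht hst
      have hIle : (∫ u in s..t, g u) ≤ 0 := by
        rw [intervalIntegral.integral_of_le hst]
        apply integral_nonpos_of_ae
        have hsub : Set.Ioc s t ⊆ Set.Icc (0:ℝ) T := fun u hu =>
          ⟨hs.1.trans hu.1.le, hu.2.trans ht.2⟩
        exact ae_restrict_of_ae_restrict_of_subset hsub hgae
      linarith [hφdiff s t hs ht hst, hIle]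
    intro t ht
    unfold skorokhod
    have hφt0 : φ t ≤ 0 := by
      have := hanti 0 ⟨le_rfl, hT.le⟩ t ht ht.1
      linarith [hφ0]
    have hle : ∀ y ∈ (fun u => min (φ u) 0) '' Set.Icc 0 t, φ t ≤ y := by
      rintro y ⟨u, hu, rfl⟩
      exact le_min (hanti u ⟨hu.1, hu.2.trans ht.2⟩ t ht hu.2) hφt0
    have hmem : φ t ∈ (fun u => min (φ u) 0) '' Set.Icc 0 t := by
      refine ⟨t, ⟨ht.1, le_rfl⟩, ?_⟩
      simp [min_eq_left hφt0]
    have : sInf ((fun u => min (φ u) 0) '' Set.Icc 0 t) = φ t :=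
      le_antisymm (csInf_le ⟨φ t, hle⟩ hmem) (le_csInf ⟨_, hmem⟩ hle)
    rw [this]
    ring
end

section
/- Let q, m ≥ 0, ξ > 0, y₀ ≥ 0, ε ∈ (0,1], and suppose U^(ε) is a continuous process satisfying U^(ε)_t = y₀ + q ∫₀ᵗ (m - (ΓU^(ε))(s)) ds + √ε ξ B_t for t ∈ [0,T], where B is a standard Brownian motion. Let Y^(ε)_t = (ΓU^(ε))(t). Then almost surely, for all t ∈ [0,T], max_{0≤s≤t} Y^(ε)_s ≤ 2 e^{2qt} y₀ + m(e^{2qt} - 1) + 2√ε ξ e^{2qt} B*_t, where B*_t = max_{0≤s≤t} |B_s|. -/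
open MeasureTheory ProbabilityTheory Real Set

/-- A standard one-dimensional Brownian motion started at `0`. -/
structure IsBrownianMotion {Ω : Type*} [MeasureSpace Ω] (B : ℝ → Ω → ℝ) : Prop where
  measurable : ∀ t, Measurable (B t)
  start : ∀ᵐ ω ∂(ℙ : MeasureTheory.Measure Ω), B 0 ω = 0
  cont : ∀ᵐ ω ∂(ℙ : MeasureTheory.Measure Ω), Continuous fun t => B t ω
  gauss_incr : ∀ s t : ℝ, 0 ≤ s → s ≤ t →
    MeasureTheory.Measure.map (fun ω => B t ω - B s ω) (ℙ : MeasureTheory.Measure Ω) =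
      ProbabilityTheory.gaussianReal 0 (Real.toNNReal (t - s))
  indep_incr : ∀ s t u v : ℝ, 0 ≤ s → s ≤ t → t ≤ u → u ≤ v →
    ProbabilityTheory.IndepFun (fun ω => B t ω - B s ω) (fun ω => B v ω - B u ω)
      (ℙ : MeasureTheory.Measure Ω)

/-- The running maximum of `|B|` over `[0,T]`: `B*_T(ω) = max_{0 ≤ t ≤ T} |B_t(ω)|`. -/
noncomputable def BStar {Ω : Type*} (B : ℝ → Ω → ℝ) (T : ℝ) (ω : Ω) : ℝ :=
  sSup ((fun t => |B t ω|) '' Set.Icc 0 T)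


lemma skorokhod_bounds {f : ℝ → ℝ} {r M : ℝ} (hr : 0 ≤ r)
    (hM : ∀ p ∈ Icc (0:ℝ) r, |f p| ≤ M) :
    0 ≤ skorokhod f r ∧ skorokhod f r ≤ 2 * M := by
  have hrmem : r ∈ Icc (0:ℝ) r := ⟨hr, le_rfl⟩
  have hne : ((fun s => min (f s) 0) '' Icc (0:ℝ) r).Nonempty :=
    ⟨min (f r) 0, ⟨r, hrmem, rfl⟩⟩
  have hM0 : 0 ≤ M := le_trans (abs_nonneg _) (hM r hrmem)
  have hbdd : BddBelow ((fun s => min (f s) 0) '' Icc (0:ℝ) r) := by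
    refine ⟨-M, ?_⟩
    rintro x ⟨p, hp, rfl⟩
    have := (abs_le.1 (hM p hp)).1
    simp only [le_min_iff]
    constructor <;> linarith
  have h1 : sInf ((fun s => min (f s) 0) '' Icc (0:ℝ) r) ≤ min (f r) 0 :=
    csInf_le hbdd ⟨r, hrmem, rfl⟩
  have h2 : -M ≤ sInf ((fun s => min (f s) 0) '' Icc (0:ℝ) r) := by
    refine le_csInf hne ?_
    rintro x ⟨p, hp, rfl⟩
    have := (abs_le.1 (hM p hp)).1
    simp only [le_min_iff]
    constructor <;> linarith
  have h3 : f r ≤ M := (abs_le.1 (hM r hrmem)).2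
  have h4 : min (f r) 0 ≤ f r := min_le_left _ _
  unfold skorokhod
  constructor <;> linarith

lemma skorokhod_intervalIntegrable {f : ℝ → ℝ} {b : ℝ} (hb : 0 ≤ b)
    (hf : ContinuousOn f (Icc 0 b)) :
    IntervalIntegrable (fun r => skorokhod f r) volume 0 b := by
  obtain ⟨M, hM⟩ := isCompact_Icc.exists_bound_of_continuousOn hf
  have hbb : ∀ r ∈ Icc (0:ℝ) b, BddBelow ((fun s => min (f s) 0) '' Icc (0:ℝ) r) := by
    intro r hr
    refine ⟨-M, ?_⟩
    rintro x ⟨p, hp, rfl⟩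
    have hpb : p ∈ Icc (0:ℝ) b := ⟨hp.1, hp.2.trans hr.2⟩
    have := (abs_le.1 (hM p hpb)).1
    have hM0 : 0 ≤ M := le_trans (abs_nonneg _) (hM p hpb)
    simp only [le_min_iff]
    constructor <;> linarith
  have hanti : AntitoneOn (fun r => sInf ((fun s => min (f s) 0) '' Icc (0:ℝ) r))
      (uIcc (0:ℝ) b) := by
    rw [uIcc_of_le hb]
    intro r hr r' hr' hrr'
    exact csInf_le_csInf (hbb r' hr') ⟨min (f r) 0, ⟨r, ⟨hr.1, le_rfl⟩, rfl⟩⟩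
      (image_mono (Icc_subset_Icc le_rfl hrr'))
  have h1 : IntervalIntegrable f volume 0 b := hf.intervalIntegrable_of_Icc hb
  have h2 := hanti.intervalIntegrable (μ := volume)
  exact h1.sub h2

lemma integral_exp_two_q {q s : ℝ} (hq : 0 < q) :
    ∫ r in (0:ℝ)..s, Real.exp (2*q*r) = (Real.exp (2*q*s) - 1) / (2*q) := by
  have hne : (2*q) ≠ 0 := by positivity
  have hd : ∀ r ∈ uIcc (0:ℝ) s, HasDerivAt (fun x => Real.exp (2*q*x) / (2*q))
      (Real.exp (2*q*r)) r := by
    intro r _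
    have h1 : HasDerivAt (fun x : ℝ => 2*q*x) (2*q) r := by
      simpa using (hasDerivAt_id r).const_mul (2*q)
    have h2 := (h1.exp).div_const (2*q)
    simpa [mul_div_assoc, mul_div_cancel_right₀ _ hne] using h2
  have hint : IntervalIntegrable (fun r => Real.exp (2*q*r)) volume 0 s := by
    apply Continuous.intervalIntegrable; continuity
  have := intervalIntegral.integral_eq_sub_of_hasDerivAt hd hint
  rw [this]
  simp
  ring

lemma gron_delta (f : ℝ → ℝ) (t q m A δ : ℝ) (ht : 0 ≤ t) (hq : 0 ≤ q)
    (hm : 0 ≤ m) (hA : 0 ≤ A) (hδ : 0 < δ) (hf : ContinuousOn f (Icc 0 t))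
    (hfA : ∀ s ∈ Icc (0:ℝ) t, |f s - q * ∫ r in (0:ℝ)..s, (m - skorokhod f r)| ≤ A) :
    ∀ s ∈ Icc (0:ℝ) t, |f s| ≤ (A + m/2 + δ) * Real.exp (2*q*s) - m/2 := by
  set C := A + m/2 + δ with hC
  have hC0 : 0 < C := by positivity
  set ψ : ℝ → ℝ := fun s => C * Real.exp (2*q*s) - m/2 with hψdef
  have hψcont : Continuous ψ := by fun_prop
  have hψmono : Monotone ψ := by
    intro a b hab
    have : Real.exp (2*q*a) ≤ Real.exp (2*q*b) := by
      apply Real.exp_le_exp.2; nlinarith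
    simp only [hψdef]
    nlinarith
  have hψpos : ∀ s, 0 ≤ s → δ ≤ ψ s := by
    intro s hs
    have h1 : (1:ℝ) ≤ Real.exp (2*q*s) := Real.one_le_exp (by positivity)
    simp only [hψdef]
    nlinarith
  by_contra hcon
  push_neg at hcon
  obtain ⟨s₀, hs₀, hviol⟩ := hcon
  set V := {s | s ∈ Icc (0:ℝ) t ∧ ψ s ≤ |f s|} with hVdef
  have hVne : V.Nonempty := ⟨s₀, hs₀, le_of_lt hviol⟩
  have hVbdd : BddBelow V := ⟨0, fun x hx => hx.1.1⟩
  have hVclosed : IsClosed V := by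
    have : V = Icc 0 t ∩ (fun s => |f s| - ψ s) ⁻¹' Ici 0 := by
      ext x; simp only [hVdef, mem_setOf_eq, mem_inter_iff, mem_preimage, mem_Ici]
      constructor
      · rintro ⟨h1, h2⟩; exact ⟨h1, by linarith⟩
      · rintro ⟨h1, h2⟩; exact ⟨h1, by linarith⟩
    rw [this]
    exact ContinuousOn.preimage_isClosed_of_isClosed
      ((hf.abs).sub hψcont.continuousOn) isClosed_Icc isClosed_Ici
  set σ := sInf V with hσdef
  have hσV : σ ∈ V := hVclosed.csInf_mem hVne hVbdd
  have hσt : σ ∈ Icc (0:ℝ) t := hσV.1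
  have hlt : ∀ p ∈ Icc (0:ℝ) t, p < σ → |f p| < ψ p := by
    intro p hp hpσ
    by_contra h
    push_neg at h
    exact absurd (csInf_le hVbdd ⟨hp, h⟩) (not_le.2 hpσ)
  have hψ0 : ψ 0 = A + δ := by
    simp only [hψdef, hC, mul_zero, Real.exp_zero, mul_one]; ring
  have hf0 : |f 0| ≤ A := by
    have := hfA 0 ⟨le_rfl, ht⟩
    simpa using this
  have hσpos : 0 < σ := by
    rcases eq_or_lt_of_le hσt.1 with h0 | h0
    · exfalso
      have h1 := hσV.2
      rw [← h0] at h1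
      linarith
    · exact h0
  -- |f σ| ≤ ψ σ by taking limits from the left
  have hfσle : |f σ| ≤ ψ σ := by
    have hmem : σ ∈ closure (Ico (0:ℝ) σ) := by
      rw [closure_Ico hσpos.ne]
      exact ⟨hσpos.le, le_rfl⟩
    have hneBot : (nhdsWithin σ (Ico (0:ℝ) σ)).NeBot :=
      mem_closure_iff_nhdsWithin_neBot.1 hmem
    have hsub : Ico (0:ℝ) σ ⊆ Icc 0 t := fun x hx => ⟨hx.1, (hx.2.le).trans hσt.2⟩
    have hcontw : ContinuousWithinAt (fun p => |f p| - ψ p) (Ico (0:ℝ) σ) σ := by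
      apply ContinuousWithinAt.sub
      · exact ((hf σ hσt).mono hsub).abs
      · exact hψcont.continuousWithinAt
    have hev : ∀ᶠ p in nhdsWithin σ (Ico (0:ℝ) σ), |f p| - ψ p ≤ 0 :=
      eventually_nhdsWithin_of_forall (fun p hp => by
        have := hlt p (hsub hp) hp.2
        linarith)
    have := le_of_tendsto hcontw.tendsto hev
    linarith
  have hle : ∀ p ∈ Icc (0:ℝ) σ, |f p| ≤ ψ p := by
    intro p hp
    rcases eq_or_lt_of_le hp.2 with heq | hlt'
    · rw [heq]; exact hfσle
    · exact (hlt p ⟨hp.1, hp.2.trans hσt.2⟩ hlt').le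
  -- bound on the integrand
  have hbnd : ∀ r ∈ Icc (0:ℝ) σ, |m - skorokhod f r| ≤ 2 * C * Real.exp (2*q*r) := by
    intro r hr
    have hb := skorokhod_bounds hr.1 (M := ψ r)
      (fun p hp => (hle p ⟨hp.1, hp.2.trans hr.2⟩).trans (hψmono hp.2))
    have hδψ := hψpos r hr.1
    have : 2 * ψ r = 2 * C * Real.exp (2*q*r) - m := by
      simp only [hψdef]; ring
    rw [abs_le]
    constructor <;> nlinarith [hb.1, hb.2]
  -- integrability
  have hfσcont : ContinuousOn f (Icc 0 σ) := hf.mono (Icc_subset_Icc le_rfl hσt.2)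
  have hint1 : IntervalIntegrable (fun r => m - skorokhod f r) volume 0 σ :=
    (intervalIntegrable_const).sub (skorokhod_intervalIntegrable hσpos.le hfσcont)
  have hint2 : IntervalIntegrable (fun r => |m - skorokhod f r|) volume 0 σ := hint1.abs
  have hint3 : IntervalIntegrable (fun r => 2 * C * Real.exp (2*q*r)) volume 0 σ := by
    apply Continuous.intervalIntegrable; fun_prop
  have hmono := intervalIntegral.integral_mono_on hσpos.le hint2 hint3 hbnd
  have habs := intervalIntegral.abs_integral_le_integral_abs
    (f := fun r => m - skorokhod f r) (μ := volume) hσpos.le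
  -- value of the exponential integral
  have hexp : q * ∫ r in (0:ℝ)..σ, 2 * C * Real.exp (2*q*r) = C * (Real.exp (2*q*σ) - 1) := by
    rcases eq_or_lt_of_le hq with h0 | h0
    · simp [← h0]
    · rw [intervalIntegral.integral_const_mul, integral_exp_two_q h0]
      field_simp
  have hkey : |f σ| ≤ A + q * ∫ r in (0:ℝ)..σ, |m - skorokhod f r| := by
    have h1 := hfA σ hσt
    have h2 := abs_sub_abs_le_abs_sub (f σ) (q * ∫ r in (0:ℝ)..σ, (m - skorokhod f r))
    have h3 : |q * ∫ r in (0:ℝ)..σ, (m - skorokhod f r)| =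
        q * |∫ r in (0:ℝ)..σ, (m - skorokhod f r)| := by
      rw [abs_mul, abs_of_nonneg hq]
    nlinarith [abs_nonneg (∫ r in (0:ℝ)..σ, (m - skorokhod f r))]
  have hfin : |f σ| ≤ ψ σ - δ := by
    have h4 : q * (∫ r in (0:ℝ)..σ, |m - skorokhod f r|) ≤
        q * ∫ r in (0:ℝ)..σ, 2 * C * Real.exp (2*q*r) := by
      apply mul_le_mul_of_nonneg_left hmono hq
    have : ψ σ - δ = A + C * (Real.exp (2*q*σ) - 1) := by
      simp only [hψdef, hC]; ring
    linarith [hkey, hexp ▸ h4]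
  linarith [hσV.2, hψpos σ hσt.1]

lemma gron (f : ℝ → ℝ) (t q m A : ℝ) (ht : 0 ≤ t) (hq : 0 ≤ q)
    (hm : 0 ≤ m) (hA : 0 ≤ A) (hf : ContinuousOn f (Icc 0 t))
    (hfA : ∀ s ∈ Icc (0:ℝ) t, |f s - q * ∫ r in (0:ℝ)..s, (m - skorokhod f r)| ≤ A) :
    ∀ s ∈ Icc (0:ℝ) t, |f s| ≤ (A + m/2) * Real.exp (2*q*s) - m/2 := by
  intro s hs
  have hexp : 0 < Real.exp (2*q*s) := Real.exp_pos _
  apply le_of_forall_pos_le_add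
  intro ε hε
  have hδ : 0 < ε / Real.exp (2*q*s) := by positivity
  have := gron_delta f t q m A (ε / Real.exp (2*q*s)) ht hq hm hA hδ hf hfA s hs
  have heq : (A + m/2 + ε / Real.exp (2*q*s)) * Real.exp (2*q*s) =
      (A + m/2) * Real.exp (2*q*s) + ε := by
    field_simp
  linarith

theorem reflecting_OU_pathwise_bound {Ω : Type*} [MeasureSpace Ω]
    [IsProbabilityMeasure (ℙ : Measure Ω)] (B : ℝ → Ω → ℝ) (hB : IsBrownianMotion B)
    (T q m ξ y₀ ε : ℝ) (hT : 0 < T) (hq : 0 ≤ q) (hm : 0 ≤ m) (hξ : 0 < ξ)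
    (hy₀ : 0 ≤ y₀) (hε : ε ∈ Set.Ioc (0:ℝ) 1) (U : ℝ → Ω → ℝ)
    (hU : ∀ᵐ ω ∂(ℙ : Measure Ω), ContinuousOn (fun t => U t ω) (Set.Icc 0 T) ∧
      ∀ t ∈ Set.Icc 0 T, U t ω =
        y₀ + q * (∫ s in (0:ℝ)..t, (m - skorokhod (fun r => U r ω) s)) +
          Real.sqrt ε * ξ * B t ω) :
    ∀ᵐ ω ∂(ℙ : Measure Ω), ∀ t ∈ Set.Icc 0 T,
      sSup ((fun s => skorokhod (fun r => U r ω) s) '' Set.Icc 0 t) ≤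
        2 * Real.exp (2 * q * t) * y₀ + m * (Real.exp (2 * q * t) - 1) +
          2 * Real.sqrt ε * ξ * Real.exp (2 * q * t) * BStar B t ω := by
  filter_upwards [hU, hB.cont, hB.start] with ω hUω hBc hB0
  obtain ⟨hUc, hUeq⟩ := hUω
  intro t ht
  set c := Real.sqrt ε * ξ with hc
  have hc0 : 0 ≤ c := mul_nonneg (Real.sqrt_nonneg _) hξ.le
  set f : ℝ → ℝ := fun r => U r ω with hfdef
  have htT : Icc (0:ℝ) t ⊆ Icc 0 T := Icc_subset_Icc le_rfl ht.2
  -- BStar facts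
  have hBbdd : BddAbove ((fun s => |B s ω|) '' Icc (0:ℝ) t) :=
    (isCompact_Icc.image_of_continuousOn (hBc.abs.continuousOn)).bddAbove
  have hBle : ∀ s ∈ Icc (0:ℝ) t, |B s ω| ≤ BStar B t ω := fun s hs =>
    le_csSup hBbdd ⟨s, hs, rfl⟩
  have hBstar0 : 0 ≤ BStar B t ω := by
    have := hBle 0 ⟨le_rfl, ht.1⟩
    rw [hB0] at this
    simpa using this
  set A := y₀ + c * BStar B t ω with hA
  have hA0 : 0 ≤ A := by positivity
  have hfA : ∀ s ∈ Icc (0:ℝ) t, |f s - q * ∫ r in (0:ℝ)..s, (m - skorokhod f r)| ≤ A := by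
    intro s hs
    have heq := hUeq s (htT hs)
    have : f s - q * ∫ r in (0:ℝ)..s, (m - skorokhod f r) = y₀ + c * B s ω := by
      rw [hfdef]
      simp only
      rw [heq]
      ring
    rw [this]
    calc |y₀ + c * B s ω| ≤ |y₀| + |c * B s ω| := abs_add_le _ _
      _ = y₀ + c * |B s ω| := by rw [abs_of_nonneg hy₀, abs_mul, abs_of_nonneg hc0]
      _ ≤ y₀ + c * BStar B t ω := by nlinarith [hBle s hs]
  have hbd := gron f t q m A ht.1 hq hm hA0 (hUc.mono htT) hfA
  have hexpmono : ∀ s ∈ Icc (0:ℝ) t, Real.exp (2*q*s) ≤ Real.exp (2*q*t) := by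
    intro s hs
    apply Real.exp_le_exp.2
    nlinarith [hs.2]
  have hexp1 : (1:ℝ) ≤ Real.exp (2*q*t) := Real.one_le_exp (by nlinarith [ht.1])
  apply Real.sSup_le
  · rintro x ⟨s, hs, rfl⟩
    have hψmono : ∀ p ∈ Icc (0:ℝ) s, |f p| ≤ (A + m/2) * Real.exp (2*q*s) - m/2 := by
      intro p hp
      have h1 := hbd p ⟨hp.1, hp.2.trans hs.2⟩
      have h2 : Real.exp (2*q*p) ≤ Real.exp (2*q*s) := by
        apply Real.exp_le_exp.2; nlinarith [hp.2]
      nlinarith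
    have hb := skorokhod_bounds hs.1 hψmono
    have h3 := hexpmono s hs
    simp only
    have : 2 * ((A + m/2) * Real.exp (2*q*s) - m/2) ≤
        2 * Real.exp (2*q*t) * y₀ + m * (Real.exp (2*q*t) - 1) +
          2 * c * Real.exp (2*q*t) * BStar B t ω := by
      rw [hA]
      nlinarith [hBstar0, hexp1]
    calc skorokhod f s ≤ 2 * ((A + m/2) * Real.exp (2*q*s) - m/2) := hb.2
      _ ≤ _ := by rw [hc] at this; linarith [this]
  · rw [hc] at *
    nlinarith [hBstar0, hexp1, mul_nonneg (mul_nonneg (Real.sqrt_nonneg ε) hξ.le) hBstar0]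
end
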